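/- Let ω > 0. Then, as λ → 0⁺, ∫_{0}^{∞} (1 + λ e^{x²ω²/2})^{−2} dx ∼ √2 ω^{−1} (−log λ)^{1/2}; that is, lim_{λ→0⁺} (∫_0^∞ (1 + λ e^{x²ω²/2})^{−2} dx) / (√2 ω^{−1} (−log λ)^{1/2}) = 1. -/

import Mathlib

open Real Filter MeasureTheory

lemma aux_int (ω lam : ℝ) (hω : 0 < ω) (hlam : 0 < lam) :
    IntegrableOn (fun x : ℝ => ((1 + lam * Real.exp (x ^ 2 * ω ^ 2 / 2)) ^ 2)⁻¹)
      (Set.Ioi (0:ℝ)) := by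
  have hcont : Continuous fun x : ℝ => ((1 + lam * Real.exp (x ^ 2 * ω ^ 2 / 2)) ^ 2)⁻¹ := by
    apply Continuous.inv₀
    · continuity
    · intro x
      positivity
  refine Integrable.mono' (g := fun x => lam⁻¹ ^ 2 * Real.exp (-(ω^2) * x ^ 2))
    (((integrable_exp_neg_mul_sq (by positivity)).const_mul _).integrableOn)
    hcont.aestronglyMeasurable (ae_of_all _ fun x => ?_)
  have h1 : 0 < 1 + lam * Real.exp (x ^ 2 * ω ^ 2 / 2) := by positivity
  rw [Real.norm_eq_abs, abs_of_nonneg (by positivity)]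
  have h2 : lam * Real.exp (x ^ 2 * ω ^ 2 / 2) ≤ 1 + lam * Real.exp (x ^ 2 * ω ^ 2 / 2) := by
    linarith
  have h3 : (lam * Real.exp (x ^ 2 * ω ^ 2 / 2)) ^ 2 ≤
      (1 + lam * Real.exp (x ^ 2 * ω ^ 2 / 2)) ^ 2 := by
    apply pow_le_pow_left₀ (by positivity) h2
  have h4 := inv_anti₀ (by positivity) h3
  refine h4.trans_eq ?_
  rw [mul_pow, ← Real.exp_nat_mul, mul_inv, ← Real.exp_neg]
  ring_nf

lemma aux_low (ω lam : ℝ) (hω : 0 < ω) (hlam : 0 < lam) (b : ℝ) (hb : 0 ≤ b) :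
    b * ((1 + lam * Real.exp (b ^ 2 * ω ^ 2 / 2)) ^ 2)⁻¹ ≤
      ∫ x in Set.Ioi (0:ℝ), ((1 + lam * Real.exp (x ^ 2 * ω ^ 2 / 2)) ^ 2)⁻¹ := by
  set f := fun x : ℝ => ((1 + lam * Real.exp (x ^ 2 * ω ^ 2 / 2)) ^ 2)⁻¹ with hf
  have hint := aux_int ω lam hω hlam
  have h1 : ∫ x in Set.Ioc (0:ℝ) b, f x ≤ ∫ x in Set.Ioi (0:ℝ), f x := by
    apply setIntegral_mono_set hint (ae_of_all _ fun x => by positivity)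
    exact HasSubset.Subset.eventuallyLE Set.Ioc_subset_Ioi_self
  refine le_trans ?_ h1
  have h2 : ∫ x in Set.Ioc (0:ℝ) b, (fun _ => f b) x ≤ ∫ x in Set.Ioc (0:ℝ) b, f x := by
    apply setIntegral_mono_on (integrableOn_const measure_Ioc_lt_top.ne)
      (hint.mono_set Set.Ioc_subset_Ioi_self) measurableSet_Ioc
    intro x hx
    simp only [hf]
    apply inv_anti₀ (by positivity)
    apply pow_le_pow_left₀ (by positivity)
    have : x ^ 2 ≤ b ^ 2 := by nlinarith [hx.1, hx.2]
    have := Real.exp_le_exp.mpr (by nlinarith [sq_nonneg ω] : x ^ 2 * ω ^ 2 / 2 ≤ b ^ 2 * ω ^ 2 / 2)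
    nlinarith [Real.exp_pos (x ^ 2 * ω ^ 2 / 2)]
  refine le_trans ?_ h2
  rw [setIntegral_const, Real.volume_real_Ioc_of_le hb, smul_eq_mul]
  simp [hf]

lemma aux_tail_eq (c b : ℝ) (hc : 0 < c) :
    ∫ x in Set.Ioi b, x * Real.exp (-c * x ^ 2) = Real.exp (-c * b ^ 2) / (2 * c) := by
  have := integral_Ioi_of_hasDerivAt_of_tendsto
    (f := fun x => -Real.exp (-c * x ^ 2) / (2 * c))
    (f' := fun x => x * Real.exp (-c * x ^ 2)) (a := b) (m := 0)
    ?_ ?_ ?_ ?_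
  · rw [this]; field_simp; ring
  · apply Continuous.continuousWithinAt; continuity
  · intro x _
    have h : HasDerivAt (fun x : ℝ => -c * x ^ 2) (-c * (2 * x)) x := by
      simpa using ((hasDerivAt_pow 2 x).const_mul (-c))
    have := ((h.exp).neg).div_const (2 * c)
    refine this.congr_deriv ?_
    rw [div_eq_iff (by positivity)]
    ring
  · exact ((integrable_mul_exp_neg_mul_sq hc).integrableOn)
  · rw [show (0:ℝ) = -0 / (2 * c) by simp]
    apply Tendsto.div_const
    apply Tendsto.neg
    apply Real.tendsto_exp_atBot.comp
    have : Tendsto (fun x : ℝ => c * x ^ 2) atTop atTop := by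
      apply Tendsto.const_mul_atTop hc
      exact tendsto_pow_atTop (by norm_num)
    simpa [neg_mul, Function.comp_def] using tendsto_neg_atTop_atBot.comp this

lemma aux_up (ω lam b : ℝ) (hω : 0 < ω) (hlam : 0 < lam) (hb : 0 < b) :
    ∫ x in Set.Ioi (0:ℝ), ((1 + lam * Real.exp (x ^ 2 * ω ^ 2 / 2)) ^ 2)⁻¹ ≤
      b + lam⁻¹ ^ 2 * Real.exp (-(ω ^ 2) * b ^ 2) / (2 * ω ^ 2 * b) := by
  set f := fun x : ℝ => ((1 + lam * Real.exp (x ^ 2 * ω ^ 2 / 2)) ^ 2)⁻¹ with hf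
  have hint := aux_int ω lam hω hlam
  have hsplit : ∫ x in Set.Ioi (0:ℝ), f x =
      (∫ x in Set.Ioc (0:ℝ) b, f x) + ∫ x in Set.Ioi b, f x := by
    rw [← setIntegral_union (Set.Ioc_disjoint_Ioi le_rfl) measurableSet_Ioi
      (hint.mono_set Set.Ioc_subset_Ioi_self)
      (hint.mono_set (Set.Ioi_subset_Ioi hb.le)),
      Set.Ioc_union_Ioi_eq_Ioi hb.le]
  rw [hsplit]
  have h1 : ∫ x in Set.Ioc (0:ℝ) b, f x ≤ b := by
    have : ∫ x in Set.Ioc (0:ℝ) b, f x ≤ ∫ _x in Set.Ioc (0:ℝ) b, (1:ℝ) := by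
      apply setIntegral_mono_on (hint.mono_set Set.Ioc_subset_Ioi_self)
        (integrableOn_const measure_Ioc_lt_top.ne) measurableSet_Ioc
      intro x _
      rw [inv_le_one_iff₀]
      right
      nlinarith [mul_pos hlam (Real.exp_pos (x ^ 2 * ω ^ 2 / 2))]
    refine this.trans ?_
    rw [setIntegral_const, Real.volume_real_Ioc_of_le hb.le, smul_eq_mul]
    linarith
  have h2 : ∫ x in Set.Ioi b, f x ≤ lam⁻¹ ^ 2 * Real.exp (-(ω ^ 2) * b ^ 2) / (2 * ω ^ 2 * b) := by
    have hgint : IntegrableOn (fun x => lam⁻¹ ^ 2 / b * (x * Real.exp (-(ω ^ 2) * x ^ 2)))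
        (Set.Ioi b) := by
      exact (((integrable_mul_exp_neg_mul_sq (by positivity)).const_mul _).integrableOn)
    have hmono : ∫ x in Set.Ioi b, f x ≤
        ∫ x in Set.Ioi b, lam⁻¹ ^ 2 / b * (x * Real.exp (-(ω ^ 2) * x ^ 2)) := by
      apply setIntegral_mono_on (hint.mono_set (Set.Ioi_subset_Ioi hb.le)) hgint
        measurableSet_Ioi
      intro x hx
      have hxb : b < x := hx
      have hstep1 : f x ≤ lam⁻¹ ^ 2 * Real.exp (-(ω ^ 2) * x ^ 2) := by
        simp only [hf]
        have h3 : (lam * Real.exp (x ^ 2 * ω ^ 2 / 2)) ^ 2 ≤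
            (1 + lam * Real.exp (x ^ 2 * ω ^ 2 / 2)) ^ 2 := by
          apply pow_le_pow_left₀ (by positivity)
          nlinarith [Real.exp_pos (x ^ 2 * ω ^ 2 / 2)]
        have h4 := inv_anti₀ (by positivity) h3
        refine h4.trans_eq ?_
        rw [mul_pow, ← Real.exp_nat_mul, mul_inv, ← Real.exp_neg]
        ring_nf
      refine hstep1.trans ?_
      have hxpos : 0 < x := hb.trans hxb
      have h5 : (1:ℝ) ≤ x / b := (one_le_div hb).mpr hxb.le
      have h6 : lam⁻¹ ^ 2 * Real.exp (-(ω ^ 2) * x ^ 2) ≤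
          (x / b) * (lam⁻¹ ^ 2 * Real.exp (-(ω ^ 2) * x ^ 2)) := by
        nlinarith [Real.exp_pos (-(ω ^ 2) * x ^ 2), sq_nonneg lam⁻¹,
          mul_pos (Real.exp_pos (-(ω ^ 2) * x ^ 2)) (pow_pos (inv_pos.mpr hlam) 2)]
      refine h6.trans_eq ?_
      field_simp
    refine hmono.trans_eq ?_
    rw [MeasureTheory.integral_const_mul, aux_tail_eq _ _ (by positivity : (0:ℝ) < ω ^ 2)]
    field_simp
  linarith

lemma aux_sqrt_atTop : Tendsto Real.sqrt atTop atTop := by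
  apply tendsto_atTop_atTop.mpr
  intro b
  refine ⟨max 0 (b ^ 2), fun t ht => ?_⟩
  have h2 : b ^ 2 ≤ t := le_trans (le_max_right _ _) ht
  calc b ≤ |b| := le_abs_self b
  _ = Real.sqrt (b ^ 2) := (Real.sqrt_sq_eq_abs b).symm
  _ ≤ Real.sqrt t := Real.sqrt_le_sqrt h2

lemma aux_inv_sqrt : Tendsto (fun t : ℝ => 1 / Real.sqrt t) atTop (nhds 0) := by
  simpa [Function.comp_def] using tendsto_inv_atTop_zero.comp aux_sqrt_atTop

lemma aux_exp_neg_sqrt (c : ℝ) (hc : 0 < c) :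
    Tendsto (fun t : ℝ => Real.exp (-c * Real.sqrt t)) atTop (nhds 0) := by
  apply Real.tendsto_exp_atBot.comp
  have h : Tendsto (fun t : ℝ => c * Real.sqrt t) atTop atTop :=
    Tendsto.const_mul_atTop hc aux_sqrt_atTop
  simpa [neg_mul, Function.comp_def] using tendsto_neg_atTop_atBot.comp h

lemma aux_G_lim : Tendsto (fun t : ℝ =>
    Real.sqrt (1 - 1 / Real.sqrt t) * ((1 + Real.exp (-Real.sqrt t)) ^ 2)⁻¹)
    atTop (nhds 1) := by
  have h1 : Tendsto (fun t : ℝ => Real.sqrt (1 - 1 / Real.sqrt t)) atTop (nhds 1) := by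
    have : Tendsto (fun t : ℝ => 1 - 1 / Real.sqrt t) atTop (nhds 1) := by
      simpa using tendsto_const_nhds.sub aux_inv_sqrt
    have := (Real.continuous_sqrt.tendsto 1).comp this
    simpa [Function.comp_def] using this
  have h2 : Tendsto (fun t : ℝ => ((1 + Real.exp (-Real.sqrt t)) ^ 2)⁻¹) atTop (nhds 1) := by
    have he : Tendsto (fun t : ℝ => Real.exp (-Real.sqrt t)) atTop (nhds 0) := by
      simpa using aux_exp_neg_sqrt 1 one_pos
    have : Tendsto (fun t : ℝ => (1 + Real.exp (-Real.sqrt t)) ^ 2) atTop (nhds 1) := by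
      have h := ((tendsto_const_nhds (x := (1:ℝ))).add he).pow 2
      norm_num at h
      exact h
    simpa using this.inv₀ (by norm_num)
  simpa using h1.mul h2

lemma aux_H_lim : Tendsto (fun t : ℝ =>
    Real.sqrt (1 + 1 / Real.sqrt t) + Real.exp (-2 * Real.sqrt t)) atTop (nhds 1) := by
  have h1 : Tendsto (fun t : ℝ => Real.sqrt (1 + 1 / Real.sqrt t)) atTop (nhds 1) := by
    have : Tendsto (fun t : ℝ => 1 + 1 / Real.sqrt t) atTop (nhds 1) := by
      simpa using tendsto_const_nhds.add aux_inv_sqrt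
    have := (Real.continuous_sqrt.tendsto 1).comp this
    simpa [Function.comp_def] using this
  simpa using h1.add (aux_exp_neg_sqrt 2 two_pos)

lemma aux_key (ω lam : ℝ) (hω : 0 < ω) (hlam : 0 < lam) (hL : 1 ≤ -Real.log lam) :
    Real.sqrt (1 - 1 / Real.sqrt (-Real.log lam)) *
        ((1 + Real.exp (-Real.sqrt (-Real.log lam))) ^ 2)⁻¹ ≤
      (∫ x in Set.Ioi (0 : ℝ), ((1 + lam * Real.exp (x ^ 2 * ω ^ 2 / 2)) ^ 2)⁻¹) /
        (Real.sqrt 2 * ω⁻¹ * Real.sqrt (-Real.log lam)) ∧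
      (∫ x in Set.Ioi (0 : ℝ), ((1 + lam * Real.exp (x ^ 2 * ω ^ 2 / 2)) ^ 2)⁻¹) /
        (Real.sqrt 2 * ω⁻¹ * Real.sqrt (-Real.log lam)) ≤
        Real.sqrt (1 + 1 / Real.sqrt (-Real.log lam)) +
          Real.exp (-2 * Real.sqrt (-Real.log lam)) := by
  set L := -Real.log lam with hLdef
  have hL0 : 0 < L := lt_of_lt_of_le one_pos hL
  set s := Real.sqrt L with hsdef
  have hs2 : s ^ 2 = L := Real.sq_sqrt hL0.le
  have hs0' : 0 ≤ s := Real.sqrt_nonneg L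
  have hs1 : 1 ≤ s := by nlinarith
  have hs0 : 0 < s := lt_of_lt_of_le one_pos hs1
  have hsqrt2 : (Real.sqrt 2) ^ 2 = 2 := Real.sq_sqrt (by norm_num)
  set a := Real.sqrt 2 * ω⁻¹ * s with hadef
  have ha : 0 < a := by
    apply mul_pos (mul_pos (Real.sqrt_pos.mpr two_pos) (inv_pos.mpr hω)) hs0
  have ha2 : a ^ 2 * ω ^ 2 = 2 * L := by
    rw [hadef]
    have hω' : ω ≠ 0 := ne_of_gt hω
    field_simp
    nlinarith
  have hexplam : lam = Real.exp (-L) := by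
    rw [hLdef, neg_neg]
    exact (Real.exp_log hlam).symm
  clear_value L
  clear_value s
  clear_value a
  constructor
  · -- lower bound
    set u := Real.sqrt (1 - 1 / s) with hudef
    have hu0 : 0 ≤ u := Real.sqrt_nonneg _
    have hinv : 1 / s ≤ 1 := by rw [div_le_one hs0]; exact hs1
    have hu2 : u ^ 2 = 1 - 1 / s := Real.sq_sqrt (by linarith)
    clear_value u
    set b := a * u with hbdef
    clear_value b
    have hb0 : 0 ≤ b := hbdef ▸ mul_nonneg ha.le hu0
    have hbExp : b ^ 2 * ω ^ 2 / 2 = L - s := by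
      have h : b ^ 2 * ω ^ 2 = a ^ 2 * ω ^ 2 * u ^ 2 := by rw [hbdef]; ring
      rw [h, ha2, hu2]
      field_simp
      nlinarith
    have hbval : lam * Real.exp (b ^ 2 * ω ^ 2 / 2) = Real.exp (-s) := by
      rw [hbExp, hexplam, ← Real.exp_add]
      ring_nf
    have hlow := aux_low ω lam hω hlam b hb0
    rw [hbval] at hlow
    rw [le_div_iff₀ ha]
    calc u * ((1 + Real.exp (-s)) ^ 2)⁻¹ * a = b * ((1 + Real.exp (-s)) ^ 2)⁻¹ := by
          rw [hbdef]; ring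
      _ ≤ _ := hlow
  · -- upper bound
    set v := Real.sqrt (1 + 1 / s) with hvdef
    have hv0 : 0 ≤ v := Real.sqrt_nonneg _
    have hspos : 0 < 1 / s := by positivity
    have hv2 : v ^ 2 = 1 + 1 / s := Real.sq_sqrt (by linarith)
    have hv1 : 1 ≤ v := by nlinarith
    clear_value v
    set b' := a * v with hbdef'
    clear_value b'
    have hb' : 0 < b' := hbdef' ▸ mul_pos ha (lt_of_lt_of_le one_pos hv1)
    have hb'Exp : b' ^ 2 * ω ^ 2 = 2 * (L + s) := by
      have h : b' ^ 2 * ω ^ 2 = a ^ 2 * ω ^ 2 * v ^ 2 := by rw [hbdef']; ring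
      rw [h, ha2, hv2]
      field_simp
      nlinarith
    have hup := aux_up ω lam b' hω hlam hb'
    have hcoef : lam⁻¹ ^ 2 * Real.exp (-(ω ^ 2) * b' ^ 2) = Real.exp (-2 * s) := by
      have h1 : lam⁻¹ ^ 2 = Real.exp (2 * L) := by
        rw [hexplam, ← Real.exp_neg, neg_neg, two_mul, Real.exp_add, sq]
      have h2 : -(ω ^ 2) * b' ^ 2 = -(2 * (L + s)) := by
        rw [← hb'Exp]; ring
      rw [h1, h2, ← Real.exp_add]
      ring_nf
    rw [hcoef] at hup
    have hba : a ≤ b' := by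
      rw [hbdef']
      exact le_mul_of_one_le_right ha.le hv1
    have hkey : 1 ≤ 2 * ω ^ 2 * b' * a := by
      have h4L : 2 * ω ^ 2 * (a * a) = 4 * L := by linear_combination 2 * ha2
      have hmul : a * a ≤ b' * a := mul_le_mul_of_nonneg_right hba ha.le
      have hmul2 : 2 * ω ^ 2 * (a * a) ≤ 2 * ω ^ 2 * (b' * a) :=
        mul_le_mul_of_nonneg_left hmul (by positivity)
      linarith [hmul2, h4L, hL]
    rw [div_le_iff₀ ha]
    have hexp0 : 0 < Real.exp (-2 * s) := Real.exp_pos _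
    have htail : Real.exp (-2 * s) / (2 * ω ^ 2 * b') ≤ Real.exp (-2 * s) * a := by
      rw [div_le_iff₀ (by positivity)]
      calc Real.exp (-2 * s) = Real.exp (-2 * s) * 1 := by ring
        _ ≤ Real.exp (-2 * s) * (2 * ω ^ 2 * b' * a) :=
            mul_le_mul_of_nonneg_left hkey hexp0.le
        _ = Real.exp (-2 * s) * a * (2 * ω ^ 2 * b') := by ring
    calc (∫ x in Set.Ioi (0 : ℝ), ((1 + lam * Real.exp (x ^ 2 * ω ^ 2 / 2)) ^ 2)⁻¹)
        ≤ b' + Real.exp (-2 * s) / (2 * ω ^ 2 * b') := hup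
      _ ≤ b' + Real.exp (-2 * s) * a := by linarith [htail]
      _ = (v + Real.exp (-2 * s)) * a := by rw [hbdef']; ring

/-- As `λ → 0⁺`, `∫_0^∞ (1 + λ e^{x²ω²/2})⁻² dx ∼ √2 ω⁻¹ (−log λ)^{1/2}`. -/
theorem stmt_8 (ω : ℝ) (hω : 0 < ω) :
    Tendsto (fun lam : ℝ =>
        (∫ x in Set.Ioi (0 : ℝ), ((1 + lam * Real.exp (x ^ 2 * ω ^ 2 / 2)) ^ 2)⁻¹) /
          (Real.sqrt 2 * ω⁻¹ * Real.sqrt (-Real.log lam)))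
      (nhdsWithin 0 (Set.Ioi 0)) (nhds 1) := by
  have hlog : Tendsto (fun lam : ℝ => -Real.log lam) (nhdsWithin 0 (Set.Ioi 0)) atTop := by
    have h := Real.tendsto_log_nhdsGT_zero
    simpa [Function.comp_def] using tendsto_neg_atBot_atTop.comp h
  have hG := aux_G_lim.comp hlog
  have hH := aux_H_lim.comp hlog
  refine tendsto_of_tendsto_of_tendsto_of_le_of_le' hG hH ?_ ?_
  · filter_upwards [self_mem_nhdsWithin, hlog.eventually_ge_atTop 1] with lam hmem hge
    exact (aux_key ω lam hω hmem hge).1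
  · filter_upwards [self_mem_nhdsWithin, hlog.eventually_ge_atTop 1] with lam hmem hge
    exact (aux_key ω lam hω hmem hge).2
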